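/- Every negative rational loop g in GL(n,ℂ) can be written as a finite product of simple elements of the two types p_{α,β,V,W} and m_{α,k,N}. -/

import Mathlib

set_option synthInstance.maxHeartbeats 1000000
set_option maxHeartbeats 1000000
open scoped Matrix

/-- Inclusion of constants into the field of rational functions. -/
noncomputable def ratC (z : ℂ) : RatFunc ℂ := algebraMap ℂ (RatFunc ℂ) z

/-- A simple element of the form `p_{α,β,V,W}(λ) = ((λ-α)/(λ-β)) π_V + π_W`,
where `ℂⁿ = V ⊕ W` is a direct sum decomposition and `π_V, π_W` are the projections
along this decomposition.  Such decompositions together with their projections correspond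
exactly to idempotent matrices `P` (with `V = im P`, `W = ker P`, `π_V = P`, `π_W = 1 - P`). -/
def IsSimpleP {n : ℕ} (M : Matrix (Fin n) (Fin n) (RatFunc ℂ)) : Prop :=
  ∃ (α β : ℂ) (P : Matrix (Fin n) (Fin n) ℂ), α ≠ β ∧ P * P = P ∧
    M = ((RatFunc.X - RatFunc.C α) / (RatFunc.X - RatFunc.C β)) • P.map ratC +
        (1 - P).map ratC

/-- A simple element of the form `m_{α,k,N}(λ) = Id + (λ-α)^{-k} N`, where `k ≥ 1` and
`N² = 0`. -/
def IsSimpleM {n : ℕ} (M : Matrix (Fin n) (Fin n) (RatFunc ℂ)) : Prop :=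
  ∃ (α : ℂ) (k : ℕ) (N : Matrix (Fin n) (Fin n) ℂ), 1 ≤ k ∧ N * N = 0 ∧
    M = 1 + ((RatFunc.X - RatFunc.C α) ^ k)⁻¹ • N.map ratC

open Polynomial
open scoped Classical in
noncomputable def glnV : Valuation (RatFunc ℂ) (WithZero (Multiplicative ℤ)) :=
  FunctionField.inftyValuation ℂ

/-- `glnSmall f` means `f` vanishes at infinity. -/
def glnSmall (f : RatFunc ℂ) : Prop := glnV f < 1

open scoped Classical in
lemma glnSmall_iff (f : RatFunc ℂ) : glnSmall f ↔ (f = 0 ∨ f.intDegree < 0) := by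
  unfold glnSmall glnV
  rcases eq_or_ne f 0 with rfl | hf
  · simp [FunctionField.inftyValuation_apply, FunctionField.inftyValuationDef]
  · rw [FunctionField.inftyValuation, FunctionField.inftyValuation_apply, FunctionField.inftyValuation_of_nonzero ℂ hf, WithZero.exp]
    rw [show (1 : WithZero (Multiplicative ℤ)) = ((1 : Multiplicative ℤ) : WithZero (Multiplicative ℤ)) from rfl,
      WithZero.coe_lt_coe]
    rw [show (1 : Multiplicative ℤ) = Multiplicative.ofAdd 0 from rfl, Multiplicative.ofAdd_lt]
    simp [hf]

lemma glnSmall_zero : glnSmall (0 : RatFunc ℂ) := (glnSmall_iff 0).2 (Or.inl rfl)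

lemma glnSmall_add {f g : RatFunc ℂ} (hf : glnSmall f) (hg : glnSmall g) : glnSmall (f + g) :=
  glnV.map_add_lt hf hg

lemma glnSmall_mul_le {f g : RatFunc ℂ} (hf : glnSmall f) (hg : glnV g ≤ 1) : glnSmall (f * g) := by
  unfold glnSmall at *
  rw [glnV.map_mul]
  calc glnV f * glnV g ≤ glnV f * 1 := mul_le_mul_right hg _
    _ = glnV f := mul_one _
    _ < 1 := hf

lemma glnV_unit {u : RatFunc ℂ} (hu : glnSmall (u - 1)) : glnV u = 1 := by
  have h : u = 1 + (u - 1) := by ring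
  rw [h, Valuation.map_add_eq_of_lt_left, glnV.map_one]
  rwa [glnV.map_one]

lemma glnUnit_ne_zero {u : RatFunc ℂ} (hu : glnSmall (u - 1)) : u ≠ 0 := by
  intro h
  have h2 := glnV_unit hu
  rw [h, glnV.map_zero] at h2
  exact zero_ne_one h2

lemma glnSmall_div_unit {f u : RatFunc ℂ} (hf : glnSmall f) (hu : glnV u = 1) :
    glnSmall (f / u) := by
  unfold glnSmall at *
  rw [glnV.map_div, hu, div_one]
  exact hf

lemma glnSmall_le_one {f : RatFunc ℂ} (hf : glnSmall f) : glnV f ≤ 1 := le_of_lt hf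

open Polynomial


/-- The basic partial-fraction summand `c/(X-α)^k`. -/
noncomputable def pfTerm (t : ℂ × ℂ × ℕ) : RatFunc ℂ :=
  ratC t.1 * ((RatFunc.X - RatFunc.C t.2.1) ^ t.2.2)⁻¹

lemma ratC_eq_C (z : ℂ) : ratC z = RatFunc.C z := by
  rw [ratC, RatFunc.algebraMap_eq_C]

lemma pf_fld {K : Type*} [Field K] (x P R cc : K) (m : ℕ) (hx : x ≠ 0) (hR : R ≠ 0) :
    (x * P + cc * R) / (x ^ (m + 1) * R) = cc * (x ^ (m + 1))⁻¹ + P / (x ^ m * R) := by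
  field_simp
  ring

lemma pf_poly : ∀ (N : ℕ) (q p : ℂ[X]), q.natDegree ≤ N → q ≠ 0 → p.degree < q.degree →
    ∃ L : List (ℂ × ℂ × ℕ), (∀ t ∈ L, 1 ≤ t.2.2) ∧
      algebraMap ℂ[X] (RatFunc ℂ) p / algebraMap ℂ[X] (RatFunc ℂ) q = (L.map pfTerm).sum := by
  intro N
  induction N with
  | zero =>
    intro q p hN hq hdeg
    refine ⟨[], by simp, ?_⟩
    have hq0 : q.degree = (0 : ℕ) := by
      rw [degree_eq_natDegree hq, Nat.le_zero.mp hN]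
    rw [hq0] at hdeg
    have hp : p = 0 := by
      by_contra hp0
      rw [degree_eq_natDegree hp0] at hdeg
      exact_mod_cast not_le.mpr hdeg (by exact_mod_cast Nat.zero_le _)
    simp [hp]
  | succ N IH =>
    intro q p hN hq hdeg
    rcases eq_or_ne p 0 with rfl | hp0
    · exact ⟨[], by simp, by simp⟩
    rcases Nat.eq_zero_or_pos q.natDegree with hq0 | hqpos
    · exfalso
      have hq0' : q.degree = (0 : ℕ) := by rw [degree_eq_natDegree hq, hq0]
      rw [hq0', degree_eq_natDegree hp0] at hdeg
      exact_mod_cast not_le.mpr hdeg (by exact_mod_cast Nat.zero_le _)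
    obtain ⟨β, hβ⟩ := Complex.exists_root (natDegree_pos_iff_degree_pos.mp hqpos)
    obtain ⟨k, hk⟩ : ∃ k, k = q.rootMultiplicity β := ⟨_, rfl⟩
    have hk1 : 1 ≤ k := hk ▸ (rootMultiplicity_pos hq).mpr hβ
    obtain ⟨r, hr⟩ : ∃ r, r = q /ₘ (X - C β) ^ k := ⟨_, rfl⟩
    have hqr : (X - C β) ^ k * r = q := by
      rw [hr, hk]; exact pow_mul_divByMonic_rootMultiplicity_eq q β
    have hrβ : r.eval β ≠ 0 := by
      rw [hr, hk]; exact eval_divByMonic_pow_rootMultiplicity_ne_zero β hq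
    have hr0 : r ≠ 0 := fun h => hrβ (by simp [h])
    obtain ⟨c, hc⟩ : ∃ c : ℂ, c = p.eval β / r.eval β := ⟨_, rfl⟩
    obtain ⟨s, hs⟩ : ∃ s, s = p - C c * r := ⟨_, rfl⟩
    have hsβ : s.eval β = 0 := by
      rw [hs]
      simp only [eval_sub, eval_mul, eval_C, hc]
      field_simp
      ring
    obtain ⟨p', hp'⟩ := dvd_iff_isRoot.mpr hsβ
    obtain ⟨q', hq'def⟩ : ∃ q', q' = (X - C β) ^ (k - 1) * r := ⟨_, rfl⟩
    have hxne : (X - C β : ℂ[X]) ≠ 0 := X_sub_C_ne_zero β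
    have hq'0 : q' ≠ 0 := hq'def ▸ mul_ne_zero (pow_ne_zero _ hxne) hr0
    have hndq : q.natDegree = k + r.natDegree := by
      conv_lhs => rw [← hqr]
      rw [natDegree_mul (pow_ne_zero _ hxne) hr0, natDegree_pow, natDegree_X_sub_C, mul_one]
    have hndq' : q'.natDegree = (k - 1) + r.natDegree := by
      rw [hq'def, natDegree_mul (pow_ne_zero _ hxne) hr0, natDegree_pow, natDegree_X_sub_C,
        mul_one]
    have hdegr : r.degree < q.degree := degree_lt_degree (by omega)
    have hdegq'N : q'.natDegree ≤ N := by omega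
    have hdegp' : p'.degree < q'.degree := by
      rcases eq_or_ne s 0 with hs0 | hs0
      · have hpz : p' = 0 := by
          rcases mul_eq_zero.mp (hp' ▸ hs0) with h | h
          · exact absurd h hxne
          · exact h
        rw [hpz, degree_zero]
        exact Ne.bot_lt (fun hbot => hq'0 (degree_eq_bot.mp hbot))
      · have hdegs : s.degree < q.degree := by
          rw [hs]
          calc (p - C c * r).degree ≤ max p.degree (C c * r).degree := degree_sub_le _ _
            _ < q.degree := by
              apply max_lt hdeg
              calc (C c * r).degree ≤ 0 + r.degree := by
                    apply le_trans (degree_mul_le _ _)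
                    exact add_le_add_left degree_C_le _
                _ = r.degree := by rw [zero_add]
                _ < q.degree := hdegr
        have hp'0 : p' ≠ 0 := by
          intro h; rw [h, mul_zero] at hp'; exact hs0 hp'
        have h1 : s.natDegree < q.natDegree := natDegree_lt_natDegree hs0 hdegs
        have h2 : s.natDegree = 1 + p'.natDegree := by
          rw [hp', natDegree_mul hxne hp'0, natDegree_X_sub_C]
        exact degree_lt_degree (by omega)
    obtain ⟨L, hL, hsum⟩ := IH q' p' hdegq'N hq'0 hdegp'
    refine ⟨(c, β, k) :: L, ?_, ?_⟩
    · intro t ht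
      rcases List.mem_cons.mp ht with rfl | ht
      · exact hk1
      · exact hL t ht
    · rw [List.map_cons, List.sum_cons, ← hsum]
      have hx : RatFunc.X - RatFunc.C β = algebraMap ℂ[X] (RatFunc ℂ) (X - C β) := by
        rw [map_sub, RatFunc.algebraMap_C, RatFunc.algebraMap_X]
      have hiq : algebraMap ℂ[X] (RatFunc ℂ) q
          = algebraMap ℂ[X] (RatFunc ℂ) (X - C β) ^ k * algebraMap ℂ[X] (RatFunc ℂ) r := by
        rw [← map_pow, ← map_mul, hqr]
      have hiq' : algebraMap ℂ[X] (RatFunc ℂ) q'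
          = algebraMap ℂ[X] (RatFunc ℂ) (X - C β) ^ (k - 1) * algebraMap ℂ[X] (RatFunc ℂ) r := by
        rw [hq'def, map_mul, map_pow]
      have hip : algebraMap ℂ[X] (RatFunc ℂ) p
          = algebraMap ℂ[X] (RatFunc ℂ) (X - C β) * algebraMap ℂ[X] (RatFunc ℂ) p'
            + RatFunc.C c * algebraMap ℂ[X] (RatFunc ℂ) r := by
        rw [← map_mul, ← hp', ← RatFunc.algebraMap_C (K := ℂ), ← map_mul, ← map_add, hs]
        ring_nf
      have hxne' : algebraMap ℂ[X] (RatFunc ℂ) (X - C β) ≠ 0 := RatFunc.algebraMap_ne_zero hxne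
      have hrne' : algebraMap ℂ[X] (RatFunc ℂ) r ≠ 0 := RatFunc.algebraMap_ne_zero hr0
      obtain ⟨m, hm⟩ : ∃ m, k = m + 1 := ⟨k - 1, by omega⟩
      simp only [pfTerm, ratC_eq_C, hx, hiq, hiq', hip, hm, Nat.add_sub_cancel]
      exact pf_fld _ _ _ _ m hxne' hrne'

lemma glnSmall_pf (f : RatFunc ℂ) (hf : glnSmall f) :
    ∃ L : List (ℂ × ℂ × ℕ), (∀ t ∈ L, 1 ≤ t.2.2) ∧ f = (L.map pfTerm).sum := by
  rcases (glnSmall_iff f).1 hf with rfl | hd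
  · exact ⟨[], by simp, by simp⟩
  · have hf0 : f ≠ 0 := by
      intro h; rw [h, RatFunc.intDegree_zero] at hd; exact lt_irrefl 0 hd
    have hnum : f.num ≠ 0 := RatFunc.num_ne_zero hf0
    have hdeg : f.num.degree < f.denom.degree := by
      apply degree_lt_degree
      have := hd
      rw [RatFunc.intDegree] at this
      omega
    obtain ⟨L, hL, hsum⟩ := pf_poly f.denom.natDegree f.denom f.num le_rfl f.denom_ne_zero hdeg
    exact ⟨L, hL, by rw [← hsum, RatFunc.num_div_denom]⟩

open Polynomial

/-- The basic unit factor `(X-α)/(X-β)`. -/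
noncomputable def upTerm (t : ℂ × ℂ) : RatFunc ℂ :=
  (RatFunc.X - RatFunc.C t.1) / (RatFunc.X - RatFunc.C t.2)

open scoped Classical in
lemma glnV_poly {p : ℂ[X]} (hp : p ≠ 0) :
    glnV (algebraMap ℂ[X] (RatFunc ℂ) p)
      = (Multiplicative.ofAdd (p.natDegree : ℤ) : Multiplicative ℤ) := by
  rw [glnV, FunctionField.inftyValuation, FunctionField.inftyValuation_apply]
  exact FunctionField.inftyValuation.polynomial ℂ hp

lemma coe_lt_coe_iff (a b : ℤ) :
    ((Multiplicative.ofAdd a : Multiplicative ℤ) : WithZero (Multiplicative ℤ))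
      < ((Multiplicative.ofAdd b : Multiplicative ℤ) : WithZero (Multiplicative ℤ)) ↔ a < b := by
  rw [WithZero.coe_lt_coe, Multiplicative.ofAdd_lt]

lemma unit_poly : ∀ (N : ℕ) (p q : ℂ[X]), p.natDegree ≤ N → p ≠ 0 → q ≠ 0 →
    p.degree = q.degree → p.leadingCoeff = q.leadingCoeff →
    ∃ L : List (ℂ × ℂ), (∀ t ∈ L, t.1 ≠ t.2) ∧
      algebraMap ℂ[X] (RatFunc ℂ) p / algebraMap ℂ[X] (RatFunc ℂ) q = (L.map upTerm).prod := by
  intro N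
  induction N with
  | zero =>
    intro p q hN hp hq hdeg hlc
    have hp0 : p.degree ≤ 0 := by
      rw [degree_eq_natDegree hp, Nat.le_zero.mp hN]; exact le_refl _
    have hq0 : q.degree ≤ 0 := hdeg ▸ hp0
    have hpc : p = C p.leadingCoeff := by
      conv_lhs => rw [eq_C_of_degree_le_zero hp0]
      rw [eq_C_of_degree_le_zero hp0]; simp
    have hqc : q = C q.leadingCoeff := by
      conv_lhs => rw [eq_C_of_degree_le_zero hq0]
      rw [eq_C_of_degree_le_zero hq0]; simp
    have : p = q := by rw [hpc, hqc, hlc]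
    refine ⟨[], by simp, ?_⟩
    rw [this, div_self (RatFunc.algebraMap_ne_zero hq)]
    simp
  | succ N IH =>
    intro p q hN hp hq hdeg hlc
    rcases Nat.eq_zero_or_pos p.natDegree with hp0 | hppos
    · -- degree 0 case, as above
      have hp0' : p.degree ≤ 0 := by
        rw [degree_eq_natDegree hp, hp0]; exact le_refl _
      have hq0 : q.degree ≤ 0 := hdeg ▸ hp0'
      have hpc : p = C p.leadingCoeff := by
        conv_lhs => rw [eq_C_of_degree_le_zero hp0']
        rw [eq_C_of_degree_le_zero hp0']; simp
      have hqc : q = C q.leadingCoeff := by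
        conv_lhs => rw [eq_C_of_degree_le_zero hq0]
        rw [eq_C_of_degree_le_zero hq0]; simp
      have : p = q := by rw [hpc, hqc, hlc]
      refine ⟨[], by simp, ?_⟩
      rw [this, div_self (RatFunc.algebraMap_ne_zero hq)]
      simp
    · have hqpos : 0 < q.natDegree := by
        have := natDegree_eq_of_degree_eq hdeg
        omega
      obtain ⟨α, hα⟩ := Complex.exists_root (natDegree_pos_iff_degree_pos.mp hppos)
      obtain ⟨β, hβ⟩ := Complex.exists_root (natDegree_pos_iff_degree_pos.mp hqpos)
      obtain ⟨p₁, hp₁⟩ := dvd_iff_isRoot.mpr hα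
      obtain ⟨q₁, hq₁⟩ := dvd_iff_isRoot.mpr hβ
      have hxα : (X - C α : ℂ[X]) ≠ 0 := X_sub_C_ne_zero α
      have hxβ : (X - C β : ℂ[X]) ≠ 0 := X_sub_C_ne_zero β
      have hp₁0 : p₁ ≠ 0 := by rintro rfl; rw [mul_zero] at hp₁; exact hp hp₁
      have hq₁0 : q₁ ≠ 0 := by rintro rfl; rw [mul_zero] at hq₁; exact hq hq₁
      have hndp : p.natDegree = 1 + p₁.natDegree := by
        rw [hp₁, natDegree_mul hxα hp₁0, natDegree_X_sub_C]
      have hndq : q.natDegree = 1 + q₁.natDegree := by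
        rw [hq₁, natDegree_mul hxβ hq₁0, natDegree_X_sub_C]
      have hnd : p.natDegree = q.natDegree := natDegree_eq_of_degree_eq hdeg
      have hdeg₁ : p₁.degree = q₁.degree := by
        rw [degree_eq_natDegree hp₁0, degree_eq_natDegree hq₁0]
        congr 1
        omega
      have hlc₁ : p₁.leadingCoeff = q₁.leadingCoeff := by
        have h1 : p.leadingCoeff = p₁.leadingCoeff := by
          rw [hp₁, leadingCoeff_mul, (monic_X_sub_C α).leadingCoeff, one_mul]
        have h2 : q.leadingCoeff = q₁.leadingCoeff := by
          rw [hq₁, leadingCoeff_mul, (monic_X_sub_C β).leadingCoeff, one_mul]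
        rw [← h1, ← h2, hlc]
      obtain ⟨L, hL, hprod⟩ := IH p₁ q₁ (by omega) hp₁0 hq₁0 hdeg₁ hlc₁
      have hxα' : algebraMap ℂ[X] (RatFunc ℂ) (X - C α) ≠ 0 := RatFunc.algebraMap_ne_zero hxα
      have hxβ' : algebraMap ℂ[X] (RatFunc ℂ) (X - C β) ≠ 0 := RatFunc.algebraMap_ne_zero hxβ
      have hip : algebraMap ℂ[X] (RatFunc ℂ) p
          = algebraMap ℂ[X] (RatFunc ℂ) (X - C α) * algebraMap ℂ[X] (RatFunc ℂ) p₁ := by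
        rw [← map_mul, ← hp₁]
      have hiq : algebraMap ℂ[X] (RatFunc ℂ) q
          = algebraMap ℂ[X] (RatFunc ℂ) (X - C β) * algebraMap ℂ[X] (RatFunc ℂ) q₁ := by
        rw [← map_mul, ← hq₁]
      by_cases hαβ : α = β
      · subst hαβ
        refine ⟨L, hL, ?_⟩
        rw [hip, hiq, mul_div_mul_left _ _ hxα', hprod]
      · refine ⟨(α, β) :: L, ?_, ?_⟩
        · intro t ht
          rcases List.mem_cons.mp ht with rfl | ht
          · exact hαβ
          · exact hL t ht
        · rw [List.map_cons, List.prod_cons, ← hprod, hip, hiq, mul_div_mul_comm]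
          congr 1
          rw [upTerm]
          congr 1 <;> rw [map_sub, RatFunc.algebraMap_C, RatFunc.algebraMap_X]

open scoped Classical in
lemma glnUnit_decomp (u : RatFunc ℂ) (hu : glnSmall (u - 1)) :
    ∃ L : List (ℂ × ℂ), (∀ t ∈ L, t.1 ≠ t.2) ∧ u = (L.map upTerm).prod := by
  rcases eq_or_ne u 1 with rfl | hu1
  · exact ⟨[], by simp, by simp⟩
  have hu0 : u ≠ 0 := glnUnit_ne_zero hu
  have hnum : u.num ≠ 0 := RatFunc.num_ne_zero hu0
  have hden : u.denom ≠ 0 := u.denom_ne_zero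
  -- intDegree u = 0
  have hvu : glnV u = 1 := glnV_unit hu
  have hid : u.intDegree = 0 := by
    rw [glnV, FunctionField.inftyValuation, FunctionField.inftyValuation_apply,
      FunctionField.inftyValuation_of_nonzero ℂ hu0, WithZero.exp] at hvu
    have : (Multiplicative.ofAdd u.intDegree) = (Multiplicative.ofAdd (0 : ℤ)) := by
      exact_mod_cast hvu
    exact Multiplicative.ofAdd.injective this
  have hnd : u.num.natDegree = u.denom.natDegree := by
    have := hid
    rw [RatFunc.intDegree] at this
    omega
  -- leading coefficients agree
  set s : ℂ[X] := u.num - u.denom with hs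
  have hs0 : s ≠ 0 := by
    intro h
    apply hu1
    have : u.num = u.denom := by rwa [hs, sub_eq_zero] at h
    rw [← RatFunc.num_div_denom u, this, div_self (RatFunc.algebraMap_ne_zero hden)]
  have key : u * algebraMap ℂ[X] (RatFunc ℂ) u.denom = algebraMap ℂ[X] (RatFunc ℂ) u.num := by
    conv_lhs => lhs; rw [← RatFunc.num_div_denom u]
    rw [div_mul_cancel₀]
    exact RatFunc.algebraMap_ne_zero hden
  have hsu : algebraMap ℂ[X] (RatFunc ℂ) s = (u - 1) * algebraMap ℂ[X] (RatFunc ℂ) u.denom := by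
    rw [hs, map_sub, sub_mul, one_mul, key]
  have hslt : s.natDegree < u.denom.natDegree := by
    have h1 : glnV (algebraMap ℂ[X] (RatFunc ℂ) s)
        < glnV (algebraMap ℂ[X] (RatFunc ℂ) u.denom) := by
      rw [hsu, glnV.map_mul]
      have h0 : glnV (algebraMap ℂ[X] (RatFunc ℂ) u.denom) ≠ 0 := by
        rw [glnV_poly hden]; exact WithZero.coe_ne_zero
      have h2 : glnV (algebraMap ℂ[X] (RatFunc ℂ) u.denom) * glnV (u - 1)
          < glnV (algebraMap ℂ[X] (RatFunc ℂ) u.denom) * 1 :=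
        mul_lt_mul_of_pos_left hu (zero_lt_iff.2 h0)
      calc glnV (u - 1) * glnV (algebraMap ℂ[X] (RatFunc ℂ) u.denom)
          = glnV (algebraMap ℂ[X] (RatFunc ℂ) u.denom) * glnV (u - 1) := mul_comm _ _
        _ < glnV (algebraMap ℂ[X] (RatFunc ℂ) u.denom) * 1 := h2
        _ = glnV (algebraMap ℂ[X] (RatFunc ℂ) u.denom) := mul_one _
    rw [glnV_poly hs0, glnV_poly hden, coe_lt_coe_iff] at h1
    exact_mod_cast h1
  have hdeg : u.num.degree = u.denom.degree := by
    rw [degree_eq_natDegree hnum, degree_eq_natDegree hden]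
    exact_mod_cast hnd
  have hlc : u.num.leadingCoeff = u.denom.leadingCoeff := by
    have hnds : s.degree < u.denom.degree := degree_lt_degree (by omega)
    have : u.num = s + u.denom := by rw [hs]; ring
    rw [this, leadingCoeff_add_of_degree_lt hnds]
  obtain ⟨L, hL, hprod⟩ := unit_poly u.num.natDegree u.num u.denom le_rfl hnum hden hdeg hlc
  exact ⟨L, hL, by rw [← hprod, RatFunc.num_div_denom]⟩

open Polynomial

set_option maxHeartbeats 1000000
set_option synthInstance.maxHeartbeats 1000000

namespace GlnAux

variable {n : ℕ}

lemma map_stdBasisMatrix (i j : Fin n) (c : ℂ) :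
    (Matrix.single i j c).map ratC = Matrix.single i j (ratC c) := by
  ext a b
  simp only [Matrix.map_apply, Matrix.single, Matrix.of_apply]
  split <;> simp [ratC]

lemma simpleM_term (i j : Fin n) (hij : i ≠ j) (c α : ℂ) (k : ℕ) (hk : 1 ≤ k) :
    IsSimpleM (1 + Matrix.single i j (pfTerm (c, α, k))) := by
  refine ⟨α, k, Matrix.single i j c, hk, ?_, ?_⟩
  · exact Matrix.single_mul_single_of_ne c i j i (Ne.symm hij) c
  · rw [map_stdBasisMatrix, Matrix.smul_single]
    have h : ((RatFunc.X - RatFunc.C α) ^ k)⁻¹ • (ratC c) = pfTerm (c, α, k) := by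
      rw [smul_eq_mul, pfTerm]; ring
    rw [h]

lemma trans_decomp_aux (i j : Fin n) (hij : i ≠ j) :
    ∀ T : List (ℂ × ℂ × ℕ), (∀ t ∈ T, 1 ≤ t.2.2) →
    ∃ L : List (Matrix (Fin n) (Fin n) (RatFunc ℂ)), (∀ M ∈ L, IsSimpleM M) ∧
      1 + Matrix.single i j (T.map pfTerm).sum = L.prod := by
  intro T
  induction T with
  | nil => intro _; exact ⟨[], by simp, by simp⟩
  | cons t T IH =>
    intro hT
    obtain ⟨L, hL, hprod⟩ := IH (fun s hs => hT s (List.mem_cons_of_mem t hs))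
    refine ⟨(1 + Matrix.single i j (pfTerm t)) :: L, ?_, ?_⟩
    · intro M hM
      rcases List.mem_cons.mp hM with rfl | hM
      · obtain ⟨c, α, k⟩ := t
        exact simpleM_term i j hij c α k (hT _ (List.mem_cons_self))
      · exact hL M hM
    · rw [List.prod_cons, ← hprod, mul_add, mul_one, add_mul, one_mul,
        Matrix.single_mul_single_of_ne (h := Ne.symm hij)]
      rw [List.map_cons, List.sum_cons, Matrix.single_add]
      abel

lemma trans_decomp (i j : Fin n) (hij : i ≠ j) (f : RatFunc ℂ) (hf : glnSmall f) :
    ∃ L : List (Matrix (Fin n) (Fin n) (RatFunc ℂ)), (∀ M ∈ L, IsSimpleM M) ∧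
      1 + Matrix.single i j f = L.prod := by
  obtain ⟨T, hT, hsum⟩ := glnSmall_pf f hf
  obtain ⟨L, hL, hprod⟩ := trans_decomp_aux i j hij T hT
  exact ⟨L, hL, by rw [hsum]; exact hprod⟩

lemma simpleP_term (i : Fin n) (α β : ℂ) (hab : α ≠ β) :
    IsSimpleP (Matrix.diagonal (Function.update (1 : Fin n → RatFunc ℂ) i (upTerm (α, β)))) := by
  refine ⟨α, β, Matrix.single i i 1, hab, ?_, ?_⟩
  · rw [Matrix.single_mul_single_same]
    norm_num
  · ext a b
    simp only [Matrix.add_apply, Matrix.smul_apply, Matrix.map_apply, Matrix.sub_apply,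
      Matrix.single, Matrix.of_apply, Matrix.one_apply, Matrix.diagonal_apply,
      smul_eq_mul]
    rcases eq_or_ne a b with rfl | hab'
    · rcases eq_or_ne a i with rfl | hai
      · simp [Function.update_apply, ratC, upTerm]
      · have h2 : ¬(i = a) := fun h => hai h.symm
        simp [Function.update_apply, hai, h2, ratC]
    · have h1 : ¬(i = a ∧ i = b) := fun h => hab' (h.1.symm.trans h.2)
      simp [Function.update_apply, hab', h1, ratC]

lemma diag_update_mul (i : Fin n) (a b : RatFunc ℂ) :
    Matrix.diagonal (Function.update (1 : Fin n → RatFunc ℂ) i a) *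
      Matrix.diagonal (Function.update (1 : Fin n → RatFunc ℂ) i b) =
    Matrix.diagonal (Function.update (1 : Fin n → RatFunc ℂ) i (a * b)) := by
  rw [Matrix.diagonal_mul_diagonal]
  apply congrArg Matrix.diagonal
  funext j
  rcases eq_or_ne j i with rfl | hj
  · simp [Function.update_apply]
  · simp [Function.update_apply, hj]

lemma diag_entry_decomp_aux (i : Fin n) :
    ∀ T : List (ℂ × ℂ), (∀ t ∈ T, t.1 ≠ t.2) →
    ∃ L : List (Matrix (Fin n) (Fin n) (RatFunc ℂ)), (∀ M ∈ L, IsSimpleP M) ∧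
      Matrix.diagonal (Function.update (1 : Fin n → RatFunc ℂ) i (T.map upTerm).prod)
        = L.prod := by
  intro T
  induction T with
  | nil =>
    intro _
    refine ⟨[], by simp, ?_⟩
    rw [List.map_nil, List.prod_nil, List.prod_nil]
    have h : Function.update (1 : Fin n → RatFunc ℂ) i 1 = 1 := by
      funext j
      rcases eq_or_ne j i with rfl | hj
      · simp [Function.update_apply]
      · simp [Function.update_apply, hj]
    rw [h]
    exact Matrix.diagonal_one
  | cons t T IH =>
    intro hT
    obtain ⟨L, hL, hprod⟩ := IH (fun s hs => hT s (List.mem_cons_of_mem t hs))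
    refine ⟨Matrix.diagonal (Function.update (1 : Fin n → RatFunc ℂ) i (upTerm t)) :: L,
      ?_, ?_⟩
    · intro M hM
      rcases List.mem_cons.mp hM with rfl | hM
      · obtain ⟨α, β⟩ := t
        exact simpleP_term i α β (hT _ (List.mem_cons_self))
      · exact hL M hM
    · rw [List.prod_cons, ← hprod, diag_update_mul, List.map_cons, List.prod_cons]

lemma diag_entry_decomp (i : Fin n) (u : RatFunc ℂ) (hu : glnSmall (u - 1)) :
    ∃ L : List (Matrix (Fin n) (Fin n) (RatFunc ℂ)), (∀ M ∈ L, IsSimpleP M) ∧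
      Matrix.diagonal (Function.update (1 : Fin n → RatFunc ℂ) i u) = L.prod := by
  obtain ⟨T, hT, hprodu⟩ := glnUnit_decomp u hu
  obtain ⟨L, hL, hprod⟩ := diag_entry_decomp_aux i T hT
  exact ⟨L, hL, by rw [hprodu]; exact hprod⟩

lemma diag_decomp_aux (d : Fin n → RatFunc ℂ) (hd : ∀ i, glnSmall (d i - 1)) :
    ∀ l : List (Fin n), l.Nodup →
    ∃ L : List (Matrix (Fin n) (Fin n) (RatFunc ℂ)), (∀ M ∈ L, IsSimpleP M) ∧
      Matrix.diagonal (fun j => if j ∈ l then d j else 1) = L.prod := by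
  intro l
  induction l with
  | nil => intro _; exact ⟨[], by simp, by simp⟩
  | cons i l IH =>
    intro hnd
    have hi : i ∉ l := (List.nodup_cons.mp hnd).1
    obtain ⟨L, hL, hprod⟩ := IH (List.nodup_cons.mp hnd).2
    obtain ⟨L₁, hL₁, hprod₁⟩ := diag_entry_decomp i (d i) (hd i)
    refine ⟨L₁ ++ L, ?_, ?_⟩
    · intro M hM
      rcases List.mem_append.mp hM with hM | hM
      · exact hL₁ M hM
      · exact hL M hM
    · rw [List.prod_append, ← hprod, ← hprod₁, Matrix.diagonal_mul_diagonal]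
      apply congrArg Matrix.diagonal
      funext j
      rcases eq_or_ne j i with rfl | hj
      · simp [Function.update_apply, hi]
      · simp [Function.update_apply, hj, List.mem_cons]

lemma diag_decomp (d : Fin n → RatFunc ℂ) (hd : ∀ i, glnSmall (d i - 1)) :
    ∃ L : List (Matrix (Fin n) (Fin n) (RatFunc ℂ)), (∀ M ∈ L, IsSimpleP M) ∧
      Matrix.diagonal d = L.prod := by
  obtain ⟨L, hL, hprod⟩ := diag_decomp_aux d hd (List.finRange n) (List.nodup_finRange n)
  refine ⟨L, hL, ?_⟩
  rw [← hprod]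
  apply congrArg Matrix.diagonal
  funext j
  simp [List.mem_finRange]

end GlnAux

open Polynomial

set_option maxHeartbeats 1000000
set_option synthInstance.maxHeartbeats 1000000

namespace GlnAux

variable {n : ℕ}

/-- A "negative loop": invertible and congruent to 1 at infinity. -/
def Good (g : Matrix (Fin n) (Fin n) (RatFunc ℂ)) : Prop :=
  g.det ≠ 0 ∧ ∀ i j, glnSmall ((g - 1) i j)

lemma Good.small_offdiag {g : Matrix (Fin n) (Fin n) (RatFunc ℂ)} (hg : Good g) {i j : Fin n}
    (hij : i ≠ j) : glnSmall (g i j) := by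
  have h := hg.2 i j
  rwa [Matrix.sub_apply, Matrix.one_apply_ne hij, sub_zero] at h

lemma Good.small_diag {g : Matrix (Fin n) (Fin n) (RatFunc ℂ)} (hg : Good g) (i : Fin n) :
    glnSmall (g i i - 1) := by
  have h := hg.2 i i
  rwa [Matrix.sub_apply, Matrix.one_apply_eq] at h

lemma Good.mul {a b : Matrix (Fin n) (Fin n) (RatFunc ℂ)} (ha : Good a) (hb : Good b) :
    Good (a * b) := by
  constructor
  · rw [Matrix.det_mul]; exact mul_ne_zero ha.1 hb.1
  · intro i j
    have key : a * b - 1 = (a - 1) * (b - 1) + ((a - 1) + (b - 1)) := by noncomm_ring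
    rw [key]
    simp only [Matrix.add_apply, Matrix.mul_apply]
    apply glnSmall_add
    · exact glnV.map_sum_lt one_ne_zero
        (fun k _ => glnSmall_mul_le (ha.2 i k) (glnSmall_le_one (hb.2 k j)))
    · exact glnSmall_add (ha.2 i j) (hb.2 i j)

lemma glnSmall_neg {f : RatFunc ℂ} (hf : glnSmall f) : glnSmall (-f) := by
  unfold glnSmall at *
  rwa [glnV.map_neg]

/-- The diagonal case of the elimination. -/
lemma diag_case (g : Matrix (Fin n) (Fin n) (RatFunc ℂ)) (hg : Good g)
    (hdiag : ∀ i j : Fin n, i ≠ j → g i j = 0) :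
    ∃ L : List (Matrix (Fin n) (Fin n) (RatFunc ℂ)),
      (∀ M ∈ L, IsSimpleP M ∨ IsSimpleM M) ∧ g = L.prod := by
  have hdg : g = Matrix.diagonal (fun i => g i i) := by
    ext a b
    rcases eq_or_ne a b with rfl | h
    · rw [Matrix.diagonal_apply_eq]
    · rw [Matrix.diagonal_apply_ne _ h, hdiag a b h]
  obtain ⟨L, hL, hprod⟩ := diag_decomp (fun i => g i i) (fun i => hg.small_diag i)
  exact ⟨L, fun M hM => Or.inl (hL M hM), by rw [hdg, hprod]⟩

lemma col_aux (κ : Fin n) : ∀ l : List (Fin n), κ ∉ l → ∀ c : Fin n → RatFunc ℂ, c κ = 0 →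
    (∀ i, i ∉ l → c i = 0) → (∀ i, glnSmall (c i)) →
    ∃ L : List (Matrix (Fin n) (Fin n) (RatFunc ℂ)), (∀ M ∈ L, IsSimpleM M) ∧
      1 + Matrix.of (fun i j => if j = κ then c i else 0) = L.prod := by
  intro l
  induction l with
  | nil =>
    intro _ c hcκ hsupp _
    have hzero : Matrix.of (fun i j => if j = κ then c i else (0 : RatFunc ℂ)) = 0 := by
      ext a b
      simp [hsupp a (List.not_mem_nil)]
    exact ⟨[], by simp, by rw [hzero, add_zero]; simp⟩
  | cons i l IH =>
    intro hκl c hcκ hsupp hc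
    have hiκ : i ≠ κ := fun h => hκl (h ▸ (List.mem_cons_self (a := i) (l := l)))
    have hκi : κ ≠ i := Ne.symm hiκ
    set c' : Fin n → RatFunc ℂ := Function.update c i 0 with hc'
    have hc'κ : c' κ = 0 := by rw [hc', Function.update_apply, if_neg hκi, hcκ]
    obtain ⟨L₂, hL₂, hprod₂⟩ := IH (fun h => hκl (List.mem_cons_of_mem i h)) c' hc'κ
      (by
        intro x hx
        rw [hc', Function.update_apply]
        rcases eq_or_ne x i with rfl | hxi
        · simp
        · rw [if_neg hxi]
          exact hsupp x (fun hmem => hx ((List.mem_cons.mp hmem).resolve_left hxi)))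
      (by
        intro x
        rw [hc', Function.update_apply]
        rcases eq_or_ne x i with rfl | hxi
        · simp [glnSmall_zero]
        · rw [if_neg hxi]; exact hc x)
    obtain ⟨L₁, hL₁, hprod₁⟩ := trans_decomp i κ hiκ (c i) (hc i)
    refine ⟨L₁ ++ L₂, ?_, ?_⟩
    · intro M hM
      rcases List.mem_append.mp hM with hM | hM
      · exact hL₁ M hM
      · exact hL₂ M hM
    · rw [List.prod_append, ← hprod₁, ← hprod₂]
      have hEA : Matrix.single i κ (c i) *
          Matrix.of (fun a b => if b = κ then c' a else (0 : RatFunc ℂ)) = 0 := by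
        ext a b
        rcases eq_or_ne a i with rfl | hai
        · rw [Matrix.single_mul_apply_same]
          simp [hc'κ]
        · rw [Matrix.single_mul_apply_of_ne (c i) i κ a b hai]
          simp
      have hsum : Matrix.single i κ (c i) +
          Matrix.of (fun a b => if b = κ then c' a else (0 : RatFunc ℂ)) =
          Matrix.of (fun a b => if b = κ then c a else 0) := by
        ext a b
        simp only [Matrix.add_apply, Matrix.of_apply, Matrix.single]
        rcases eq_or_ne b κ with rfl | hb
        · rcases eq_or_ne a i with rfl | ha
          · simp [hc', Function.update_apply]
          · simp [hc', Function.update_apply, ha, Ne.symm ha]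
        · simp [hb, Ne.symm hb]
      symm
      calc (1 + Matrix.single i κ (c i)) *
            (1 + Matrix.of (fun a b => if b = κ then c' a else (0 : RatFunc ℂ)))
          = 1 + (Matrix.single i κ (c i) +
              Matrix.of (fun a b => if b = κ then c' a else (0 : RatFunc ℂ))) +
              Matrix.single i κ (c i) *
              Matrix.of (fun a b => if b = κ then c' a else (0 : RatFunc ℂ)) := by noncomm_ring
        _ = 1 + Matrix.of (fun a b => if b = κ then c a else 0) := by
            rw [hEA, add_zero, hsum]

lemma col_decomp (κ : Fin n) (c : Fin n → RatFunc ℂ) (hcκ : c κ = 0)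
    (hc : ∀ i, glnSmall (c i)) :
    ∃ L : List (Matrix (Fin n) (Fin n) (RatFunc ℂ)), (∀ M ∈ L, IsSimpleM M) ∧
      1 + Matrix.of (fun i j => if j = κ then c i else 0) = L.prod := by
  apply col_aux κ ((List.finRange n).filter (fun x => x ≠ κ)) ?_ c hcκ ?_ hc
  · intro h
    have := List.of_mem_filter h
    simp at this
  · intro i hi
    by_cases hik : i = κ
    · rw [hik, hcκ]
    · exfalso
      exact hi (List.mem_filter.mpr ⟨List.mem_finRange i, by simpa using hik⟩)

lemma row_aux (κ : Fin n) : ∀ l : List (Fin n), κ ∉ l → ∀ d : Fin n → RatFunc ℂ, d κ = 0 →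
    (∀ j, j ∉ l → d j = 0) → (∀ j, glnSmall (d j)) →
    ∃ L : List (Matrix (Fin n) (Fin n) (RatFunc ℂ)), (∀ M ∈ L, IsSimpleM M) ∧
      1 + Matrix.of (fun i j => if i = κ then d j else 0) = L.prod := by
  intro l
  induction l with
  | nil =>
    intro _ d hdκ hsupp _
    have hzero : Matrix.of (fun i j => if i = κ then d j else (0 : RatFunc ℂ)) = 0 := by
      ext a b
      simp [hsupp b (List.not_mem_nil)]
    exact ⟨[], by simp, by rw [hzero, add_zero]; simp⟩
  | cons j l IH =>
    intro hκl d hdκ hsupp hd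
    have hjκ : j ≠ κ := fun h => hκl (h ▸ (List.mem_cons_self (a := j) (l := l)))
    have hκj : κ ≠ j := Ne.symm hjκ
    set d' : Fin n → RatFunc ℂ := Function.update d j 0 with hd'
    have hd'κ : d' κ = 0 := by rw [hd', Function.update_apply, if_neg hκj, hdκ]
    obtain ⟨L₂, hL₂, hprod₂⟩ := IH (fun h => hκl (List.mem_cons_of_mem j h)) d' hd'κ
      (by
        intro x hx
        rw [hd', Function.update_apply]
        rcases eq_or_ne x j with rfl | hxj
        · simp
        · rw [if_neg hxj]
          exact hsupp x (fun hmem => hx ((List.mem_cons.mp hmem).resolve_left hxj)))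
      (by
        intro x
        rw [hd', Function.update_apply]
        rcases eq_or_ne x j with rfl | hxj
        · simp [glnSmall_zero]
        · rw [if_neg hxj]; exact hd x)
    obtain ⟨L₁, hL₁, hprod₁⟩ := trans_decomp κ j hκj (d j) (hd j)
    refine ⟨L₂ ++ L₁, ?_, ?_⟩
    · intro M hM
      rcases List.mem_append.mp hM with hM | hM
      · exact hL₂ M hM
      · exact hL₁ M hM
    · rw [List.prod_append, ← hprod₁, ← hprod₂]
      have hBE : Matrix.of (fun a b => if a = κ then d' b else (0 : RatFunc ℂ)) *
          Matrix.single κ j (d j) = 0 := by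
        ext a b
        rcases eq_or_ne b j with rfl | hbj
        · rw [Matrix.mul_single_apply_same]
          simp [hd'κ]
        · rw [Matrix.mul_single_apply_of_ne (d j) κ j a b hbj]
          simp
      have hsum : Matrix.of (fun a b => if a = κ then d' b else (0 : RatFunc ℂ)) +
          Matrix.single κ j (d j) =
          Matrix.of (fun a b => if a = κ then d b else 0) := by
        ext a b
        simp only [Matrix.add_apply, Matrix.of_apply, Matrix.single]
        rcases eq_or_ne a κ with rfl | ha
        · rcases eq_or_ne b j with rfl | hb
          · simp [hd', Function.update_apply]
          · simp [hd', Function.update_apply, hb, Ne.symm hb]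
        · simp [ha, Ne.symm ha]
      symm
      calc (1 + Matrix.of (fun a b => if a = κ then d' b else (0 : RatFunc ℂ))) *
            (1 + Matrix.single κ j (d j))
          = 1 + (Matrix.of (fun a b => if a = κ then d' b else (0 : RatFunc ℂ)) +
              Matrix.single κ j (d j)) +
              Matrix.of (fun a b => if a = κ then d' b else (0 : RatFunc ℂ)) *
              Matrix.single κ j (d j) := by noncomm_ring
        _ = 1 + Matrix.of (fun a b => if a = κ then d b else 0) := by
            rw [hBE, add_zero, hsum]

lemma row_decomp (κ : Fin n) (d : Fin n → RatFunc ℂ) (hdκ : d κ = 0)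
    (hd : ∀ j, glnSmall (d j)) :
    ∃ L : List (Matrix (Fin n) (Fin n) (RatFunc ℂ)), (∀ M ∈ L, IsSimpleM M) ∧
      1 + Matrix.of (fun i j => if i = κ then d j else 0) = L.prod := by
  apply row_aux κ ((List.finRange n).filter (fun x => x ≠ κ)) ?_ d hdκ ?_ hd
  · intro h
    have := List.of_mem_filter h
    simp at this
  · intro i hi
    by_cases hik : i = κ
    · rw [hik, hdκ]
    · exfalso
      exact hi (List.mem_filter.mpr ⟨List.mem_finRange i, by simpa using hik⟩)

end GlnAux

open Polynomial

set_option maxHeartbeats 1000000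
set_option synthInstance.maxHeartbeats 1000000

namespace GlnAux

variable {n : ℕ}

lemma elim : ∀ (fuel k : ℕ) (g : Matrix (Fin n) (Fin n) (RatFunc ℂ)), n ≤ k + fuel → Good g →
    (∀ i j : Fin n, i ≠ j → ((i : ℕ) < k ∨ (j : ℕ) < k) → g i j = 0) →
    ∃ L : List (Matrix (Fin n) (Fin n) (RatFunc ℂ)),
      (∀ M ∈ L, IsSimpleP M ∨ IsSimpleM M) ∧ g = L.prod := by
  intro fuel
  induction fuel with
  | zero =>
    intro k g hn hg hzero
    apply diag_case g hg
    intro i j hij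
    exact hzero i j hij (Or.inl (lt_of_lt_of_le i.isLt (by omega)))
  | succ fuel IH =>
    intro k g hn hg hzero
    by_cases hk : n ≤ k
    · apply diag_case g hg
      intro i j hij
      exact hzero i j hij (Or.inl (lt_of_lt_of_le i.isLt hk))
    push_neg at hk
    set κ : Fin n := ⟨k, hk⟩ with hκdef
    have hu1 : glnSmall (g κ κ - 1) := hg.small_diag κ
    have hvu : glnV (g κ κ) = 1 := glnV_unit hu1
    have hu0 : g κ κ ≠ 0 := glnUnit_ne_zero hu1
    set c : Fin n → RatFunc ℂ := fun i => if i = κ then 0 else g i κ / g κ κ with hcdef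
    set d : Fin n → RatFunc ℂ := fun j => if j = κ then 0 else g κ j / g κ κ with hddef
    have hcκ : c κ = 0 := by rw [hcdef]; simp
    have hdκ : d κ = 0 := by rw [hddef]; simp
    have hcsmall : ∀ i, glnSmall (c i) := by
      intro i
      rw [hcdef]
      dsimp only
      by_cases hi : i = κ
      · rw [if_pos hi]; exact glnSmall_zero
      · rw [if_neg hi]; exact glnSmall_div_unit (hg.small_offdiag hi) hvu
    have hdsmall : ∀ j, glnSmall (d j) := by
      intro j
      rw [hddef]
      dsimp only
      by_cases hj : j = κ
      · rw [if_pos hj]; exact glnSmall_zero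
      · rw [if_neg hj]; exact glnSmall_div_unit (hg.small_offdiag (Ne.symm hj)) hvu
    set A : Matrix (Fin n) (Fin n) (RatFunc ℂ) :=
      Matrix.of (fun i j => if j = κ then c i else 0) with hAdef
    set B : Matrix (Fin n) (Fin n) (RatFunc ℂ) :=
      Matrix.of (fun i j => if i = κ then d j else 0) with hBdef
    have hAapply : ∀ i j, A i j = if j = κ then c i else 0 := fun i j => rfl
    have hBapply : ∀ i j, B i j = if i = κ then d j else 0 := fun i j => rfl
    have hA2 : A * A = 0 := by
      ext a b
      rw [Matrix.mul_apply]
      rw [show (0 : Matrix (Fin n) (Fin n) (RatFunc ℂ)) a b = 0 from rfl]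
      apply Finset.sum_eq_zero
      intro l _
      rcases eq_or_ne l κ with hl | hl
      · have h : A l b = 0 := by rw [hAapply l b, hl, hcκ]; exact ite_self 0
        rw [h, mul_zero]
      · have h : A a l = 0 := by rw [hAapply a l, if_neg hl]
        rw [h, zero_mul]
    have hB2 : B * B = 0 := by
      ext a b
      rw [Matrix.mul_apply]
      rw [show (0 : Matrix (Fin n) (Fin n) (RatFunc ℂ)) a b = 0 from rfl]
      apply Finset.sum_eq_zero
      intro l _
      rcases eq_or_ne l κ with hl | hl
      · have h : B a l = 0 := by rw [hBapply a l, hl, hdκ]; exact ite_self 0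
        rw [h, zero_mul]
      · have h : B l b = 0 := by rw [hBapply l b, if_neg hl]
        rw [h, mul_zero]
    have h1A : (1 + A) * (1 - A) = 1 := by
      have h : (1 + A) * (1 - A) = 1 - A * A := by noncomm_ring
      rw [h, hA2, sub_zero]
    have h1A' : (1 - A) * (1 + A) = 1 := by
      have h : (1 - A) * (1 + A) = 1 - A * A := by noncomm_ring
      rw [h, hA2, sub_zero]
    have h1B : (1 - B) * (1 + B) = 1 := by
      have h : (1 - B) * (1 + B) = 1 - B * B := by noncomm_ring
      rw [h, hB2, sub_zero]
    have h1B' : (1 + B) * (1 - B) = 1 := by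
      have h : (1 + B) * (1 - B) = 1 - B * B := by noncomm_ring
      rw [h, hB2, sub_zero]
    have hgoodA : Good (1 - A) := by
      constructor
      · have hdet : (1 - A).det * (1 + A).det = 1 := by
          rw [← Matrix.det_mul, h1A', Matrix.det_one]
        exact left_ne_zero_of_mul_eq_one hdet
      · intro i j
        have h : (1 - A - 1) i j = -(A i j) := by
          simp [Matrix.sub_apply, Matrix.neg_apply]
        rw [h]
        apply glnSmall_neg
        rw [hAapply]
        split
        · exact hcsmall i
        · exact glnSmall_zero
    have hgoodB : Good (1 - B) := by
      constructor
      · have hdet : (1 - B).det * (1 + B).det = 1 := by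
          rw [← Matrix.det_mul, h1B, Matrix.det_one]
        exact left_ne_zero_of_mul_eq_one hdet
      · intro i j
        have h : (1 - B - 1) i j = -(B i j) := by
          simp [Matrix.sub_apply, Matrix.neg_apply]
        rw [h]
        apply glnSmall_neg
        rw [hBapply]
        split
        · exact hdsmall j
        · exact glnSmall_zero
    set g₂ : Matrix (Fin n) (Fin n) (RatFunc ℂ) := (1 - A) * g * (1 - B) with hg₂def
    have hgood₂ : Good g₂ := (hgoodA.mul hg).mul hgoodB
    have hAg : ∀ i j, (A * g) i j = c i * g κ j := by
      intro i j
      rw [Matrix.mul_apply, Finset.sum_eq_single κ]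
      · rw [hAapply, if_pos rfl]
      · intro l _ hl
        rw [hAapply, if_neg hl, zero_mul]
      · intro h
        exact absurd (Finset.mem_univ κ) h
    have hMB : ∀ (h : Matrix (Fin n) (Fin n) (RatFunc ℂ)) i j, (h * B) i j = h i κ * d j := by
      intro h i j
      rw [Matrix.mul_apply, Finset.sum_eq_single κ]
      · rw [hBapply, if_pos rfl]
      · intro l _ hl
        rw [hBapply, if_neg hl, mul_zero]
      · intro hmem
        exact absurd (Finset.mem_univ κ) hmem
    have hg₂apply : ∀ i j, g₂ i j = (g i j - c i * g κ j) - (g i κ - c i * g κ κ) * d j := by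
      intro i j
      have hexp : g₂ = (g - A * g) - ((g - A * g) * B) := by
        rw [hg₂def]; noncomm_ring
      rw [hexp]
      simp only [Matrix.sub_apply]
      rw [hMB, hAg]
      simp only [Matrix.sub_apply]
      rw [hAg]
    have hzero₂ : ∀ i j : Fin n, i ≠ j → ((i : ℕ) < k + 1 ∨ (j : ℕ) < k + 1) → g₂ i j = 0 := by
      intro i j hij hlt
      rcases eq_or_ne i κ with rfl | hiκ
      · have hjκ : j ≠ κ := Ne.symm hij
        rw [hg₂apply, hcκ]
        rw [hddef]
        dsimp only
        rw [if_neg hjκ]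
        field_simp
        ring
      rcases eq_or_ne j κ with rfl | hjκ
      · have hciκ : c i = g i κ / g κ κ := by rw [hcdef]; dsimp only; rw [if_neg hiκ]
        rw [hg₂apply, hdκ, mul_zero, sub_zero, hciκ, div_mul_cancel₀ _ hu0, sub_self]
      · -- both differ from κ, so the old vanishing applies
        have hik : (i : ℕ) ≠ k := fun h => hiκ (Fin.ext h)
        have hjk : (j : ℕ) ≠ k := fun h => hjκ (Fin.ext h)
        have hlt' : (i : ℕ) < k ∨ (j : ℕ) < k := by omega
        have hgij : g i j = 0 := hzero i j hij hlt'
        rcases hlt' with hi | hj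
        · have hgiκ : g i κ = 0 := hzero i κ hiκ (Or.inl hi)
          have hci : c i = 0 := by
            rw [hcdef]; dsimp only; rw [if_neg hiκ, hgiκ, zero_div]
          rw [hg₂apply, hgij, hci, hgiκ]
          ring
        · have hgκj : g κ j = 0 := hzero κ j (Ne.symm hjκ) (Or.inr hj)
          have hdj : d j = 0 := by
            rw [hddef]; dsimp only; rw [if_neg hjκ, hgκj, zero_div]
          rw [hg₂apply, hgij, hgκj, hdj]
          ring
    obtain ⟨L₂, hL₂, hprod₂⟩ := IH (k + 1) g₂ (by omega) hgood₂ hzero₂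
    obtain ⟨LA, hLA, hprodA⟩ := col_decomp κ c hcκ hcsmall
    obtain ⟨LB, hLB, hprodB⟩ := row_decomp κ d hdκ hdsmall
    refine ⟨LA ++ L₂ ++ LB, ?_, ?_⟩
    · intro M hM
      rcases List.mem_append.mp hM with hM | hM
      · rcases List.mem_append.mp hM with hM | hM
        · exact Or.inr (hLA M hM)
        · exact hL₂ M hM
      · exact Or.inr (hLB M hM)
    · have hgeq : g = (1 + A) * g₂ * (1 + B) := by
        rw [hg₂def]
        calc g = ((1 + A) * (1 - A)) * g * ((1 - B) * (1 + B)) := by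
              rw [h1A, h1B, one_mul, mul_one]
          _ = (1 + A) * ((1 - A) * g * (1 - B)) * (1 + B) := by noncomm_ring
      rw [hgeq, List.prod_append, List.prod_append, ← hprodA, ← hprodB, ← hprod₂]

end GlnAux


/-- **Generating the full rational loop group of GL(n,ℂ).**
Every negative rational loop `g` in `GL(n,ℂ)` (an `n×n` matrix of rational functions with
`det g` not identically zero and `g(∞) = Id`, i.e. every entry of `g - Id` has numerator
degree strictly smaller than denominator degree) is a finite product of simple elements
of the types `p_{α,β,V,W}` and `m_{α,k,N}`. -/
theorem generating_GLnC (n : ℕ) (g : Matrix (Fin n) (Fin n) (RatFunc ℂ))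
    (hdet : g.det ≠ 0)
    (hneg : ∀ i j, (g - 1) i j = 0 ∨ ((g - 1) i j).intDegree < 0) :
    ∃ L : List (Matrix (Fin n) (Fin n) (RatFunc ℂ)),
      (∀ M ∈ L, IsSimpleP M ∨ IsSimpleM M) ∧ g = L.prod := by
  have hGood : GlnAux.Good g := ⟨hdet, fun i j => (glnSmall_iff _).2 (hneg i j)⟩
  obtain ⟨L, hL, hprod⟩ := GlnAux.elim n 0 g (by omega) hGood
    (by intro i j _ h; rcases h with h | h <;> omega)
  exact ⟨L, hL, hprod⟩
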